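/- Let X be a connected simple graph with bounded degree, x₀ a vertex, and e an edge with origin x₀. For every m ≥ 3, the weighted closed-path count C_m(t)(x₀, e, ē) satisfies C_m(t)(x₀, e, ē) = C_{m−2}(t)(t(e), t(e)) + 2(t−1) N_{m−2}(t, t(e), ē) + (t²−1) C_{m−2}(t)(t(e), ē, e). -/

import Mathlib

open scoped BigOperators
open SimpleGraph

noncomputable section

namespace BZ

open Classical

variable {V : Type*} (G : SimpleGraph V)

/-- Bump count of a walk: the number of indices `i` with `e_i = ē_{i+1}`. -/
def bc {x y : V} (w : G.Walk x y) : ℕ :=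
  ((w.darts.zip w.darts.tail).filter fun p => p.2 = p.1.symm).length

/-- A closed walk has a tail if `e_m = ē_1` (with `m ≥ 1`). -/
def hasTail {x : V} (w : G.Walk x x) : Prop :=
  1 ≤ w.length ∧ w.darts.getLast? = w.darts.head?.map SimpleGraph.Dart.symm

/-- Cyclic bump count of a closed walk: `cbc = bc + 1` if the walk has a tail, else `bc`. -/
def cbc {x : V} (w : G.Walk x x) : ℕ :=
  bc G w + if hasTail G w then 1 else 0

/-- `C_m(t)(x, y)`: the weighted count `∑ t^{bc(C)}` over walks from `x` to `y` of length `m`. -/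
def Cent (t : ℂ) (m : ℕ) (x y : V) : ℂ :=
  ∑' w : {w : G.Walk x y // w.length = m}, t ^ bc G w.1

/-- `C_m(t)(x, f, g)`: the weighted count `∑ t^{bc(C)}` over closed walks of length `m`
at `x` with first edge `f` and last edge `g`. -/
def CentFL (t : ℂ) (m : ℕ) (x : V) (f g : G.Dart) : ℂ :=
  ∑' w : {w : G.Walk x x // w.length = m ∧ w.darts.head? = some f ∧
      w.darts.getLast? = some g}, t ^ bc G w.1

/-- `N_m(t, x, f)`: the weighted count `∑ t^{bc(C)}` over tail-less closed walks of
length `m` at `x` with first edge `f`. -/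
def Nfirst (t : ℂ) (m : ℕ) (x : V) (f : G.Dart) : ℂ :=
  ∑' w : {w : G.Walk x x // w.length = m ∧ w.darts.head? = some f ∧ ¬ hasTail G w},
    t ^ bc G w.1

/-! ### Auxiliary list-level bump count lemmas -/

/-- Bump count of a list of darts. -/
def bcL (l : List G.Dart) : ℕ :=
  ((l.zip l.tail).filter fun p => p.2 = p.1.symm).length

lemma bc_eq {x y : V} (w : G.Walk x y) : bc G w = bcL G w.darts := rfl

variable {G}

lemma symm_inj_iff {a b : G.Dart} : a.symm = b.symm ↔ a = b :=
  ⟨fun h => by have := congrArg Dart.symm h; simpa [Dart.symm_symm] using this,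
    fun h => by rw [h]⟩

lemma bcL_nil : bcL G ([] : List G.Dart) = 0 := rfl

lemma bcL_cons (a : G.Dart) (l : List G.Dart) :
    bcL G (a :: l) = (if l.head? = some a.symm then 1 else 0) + bcL G l := by
  cases l with
  | nil => simp [bcL]
  | cons c l' =>
    by_cases h : c = a.symm <;>
      simp [bcL, List.filter_cons, h, Nat.add_comm]

lemma bcL_concat (l : List G.Dart) (b : G.Dart) :
    bcL G (l ++ [b]) = bcL G l + (if l.getLast? = some b.symm then 1 else 0) := by
  induction l with
  | nil => simp [bcL]
  | cons a l ih =>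
    rw [List.cons_append, bcL_cons, ih, bcL_cons]
    cases l with
    | nil =>
      simp only [List.nil_append, List.head?_cons, List.head?_nil, List.getLast?_singleton,
        List.getLast?_nil, Option.some.injEq]
      have : (b = a.symm) ↔ (a = b.symm) := ⟨fun h => by subst h; simp [Dart.symm_symm],
        fun h => by subst h; simp [Dart.symm_symm]⟩
      by_cases h : b = a.symm
      · rw [if_pos h, if_pos (this.mp h)]; simp only [reduceCtorEq, ↓reduceIte]
        omega
      · rw [if_neg h, if_neg (fun hh => h (this.mpr hh))]
        simp only [reduceCtorEq, ↓reduceIte]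
        omega
    | cons c l' =>
      simp only [List.cons_append, List.head?_cons, List.getLast?_cons_cons]
      by_cases hc : c = a.symm <;> simp [hc] <;> omega

lemma bcL_reverse (l : List G.Dart) :
    bcL G ((l.map Dart.symm).reverse) = bcL G l := by
  induction l with
  | nil => simp [bcL]
  | cons a l ih =>
    rw [List.map_cons, List.reverse_cons, bcL_concat, ih, List.getLast?_reverse, bcL_cons]
    have : ((l.map Dart.symm).head? = some a.symm.symm) ↔ (l.head? = some a.symm) := by
      cases l with
      | nil => simp
      | cons c l' =>
        simp only [List.map_cons, List.head?_cons, Option.some.injEq]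
        constructor
        · intro h; rw [Dart.symm_symm] at h; rw [← h, Dart.symm_symm]
        · rintro rfl; rw [Dart.symm_symm]
    simp only [Dart.symm_symm] at this ⊢
    by_cases h : l.head? = some a.symm
    · rw [if_pos h, if_pos (this.mpr h)]; omega
    · rw [if_neg h, if_neg (fun hh => h (this.mp hh))]; omega

/-! ### The extension bijection -/

lemma darts_extend (e : G.Dart) (w : G.Walk e.snd e.snd) :
    (Walk.cons e.adj (w.concat (G.adj_symm e.adj)) : G.Walk e.fst e.fst).darts
      = e :: (w.darts ++ [e.symm]) := by
  simp only [Walk.darts_cons, Walk.darts_concat, List.concat_eq_append]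
  rfl

/-- Extension of a closed walk at `e.snd` to a closed walk at `e.fst` starting with `e`
and ending with `e.symm`. -/
def extWalk (e : G.Dart) (n : ℕ) (w : {w : G.Walk e.snd e.snd // w.length = n}) :
    {w : G.Walk e.fst e.fst // w.length = n + 2 ∧ w.darts.head? = some e ∧
      w.darts.getLast? = some e.symm} :=
  ⟨Walk.cons e.adj (w.1.concat (G.adj_symm e.adj)),
    by simp [Walk.length_concat, w.2],
    by rw [darts_extend]; rfl,
    by rw [darts_extend, ← List.cons_append, List.getLast?_concat]⟩

lemma extWalk_bijective (e : G.Dart) (n : ℕ) (hn : 1 ≤ n) :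
    Function.Bijective (extWalk (G := G) e n) := by
  constructor
  · rintro ⟨a, ha⟩ ⟨b, hb⟩ h
    simp only [extWalk, Subtype.mk.injEq, Walk.cons.injEq, heq_iff_eq, true_and] at h
    obtain ⟨hv, hcopy⟩ := Walk.concat_inj h
    exact Subtype.ext (by simpa using hcopy)
  · rintro ⟨w, hl, hh, hg⟩
    have hwnil : ¬ w.Nil := by
      rw [Walk.nil_iff_length_eq, hl]; omega
    obtain ⟨y, h, p, rfl⟩ := Walk.not_nil_iff.mp hwnil
    have hy : y = e.snd := by
      have h1 : (⟨(e.fst, y), h⟩ : G.Dart) = e := by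
        simpa using hh
      have := congrArg (fun d : G.Dart => d.snd) h1
      simpa using this
    subst hy
    have hpnil : ¬ p.Nil := by
      rw [Walk.nil_iff_length_eq]
      have : (Walk.cons h p).length = n + 2 := hl
      simp only [Walk.length_cons] at this
      omega
    obtain ⟨z, h2, p2, rfl⟩ := Walk.not_nil_iff.mp hpnil
    obtain ⟨x, q, h', hpq⟩ := Walk.exists_cons_eq_concat h2 p2
    rw [hpq] at hh hg hl
    have hx : x = e.snd := by
      have h1 : (⟨(x, e.fst), h'⟩ : G.Dart) = e.symm := by
        have : (Walk.cons h (q.concat h')).darts.getLast? = some ⟨(x, e.fst), h'⟩ := by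
          rw [Walk.darts_cons, Walk.darts_concat, List.concat_eq_append,
            ← List.cons_append, List.getLast?_concat]
        rw [this] at hg
        simpa using hg
      have := congrArg (fun d : G.Dart => d.fst) h1
      simpa using this
    subst hx
    have hq : q.length = n := by
      simp only [Walk.length_cons, Walk.length_concat] at hl
      omega
    refine ⟨⟨q, hq⟩, Subtype.ext ?_⟩
    show Walk.cons e.adj (q.concat (G.adj_symm e.adj)) = Walk.cons h (Walk.cons h2 p2)
    rw [hpq]

/-- Reversal as an equivalence on fixed-length closed walks. -/
def revS (e : G.Dart) (n : ℕ) :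
    {w : G.Walk e.snd e.snd // w.length = n} ≃ {w : G.Walk e.snd e.snd // w.length = n} where
  toFun w := ⟨w.1.reverse, by simp [w.2]⟩
  invFun w := ⟨w.1.reverse, by simp [w.2]⟩
  left_inv w := Subtype.ext (by simp)
  right_inv w := Subtype.ext (by simp)

/-- First dart is `e.symm`. -/
def Ahead (e : G.Dart) {n : ℕ} (w : {w : G.Walk e.snd e.snd // w.length = n}) : Prop :=
  w.1.darts.head? = some e.symm

/-- Last dart is `e`. -/
def Blast (e : G.Dart) {n : ℕ} (w : {w : G.Walk e.snd e.snd // w.length = n}) : Prop :=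
  w.1.darts.getLast? = some e

variable (G)

lemma tsum_cond [DecidableEq V] [G.LocallyFinite] (v : V) (n : ℕ)
    (P : G.Walk v v → Prop) (t : ℂ) :
    (∑' w : {w : G.Walk v v // w.length = n ∧ P w}, t ^ bc G w.1)
      = ∑ w : {w : G.Walk v v // w.length = n}, if P w.1 then t ^ bc G w.1 else 0 := by
  classical
  rw [← Equiv.tsum_eq
      (Equiv.subtypeSubtypeEquivSubtypeInter (fun w : G.Walk v v => w.length = n) P)
      (fun w => t ^ bc G w.1), tsum_fintype, ← Finset.sum_filter,
    Finset.sum_subtype (p := fun w : {w : G.Walk v v // w.length = n} => P w.1)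
      (Finset.univ.filter fun w : {w : G.Walk v v // w.length = n} => P w.1)
      (by simp) (fun w => t ^ bc G w.1)]
  rfl

variable {G}

theorem centFL_recurrence {V : Type*} (G : SimpleGraph V) [G.LocallyFinite] (M : ℕ)
    (hconn : G.Connected) (hM : ∀ v : V, G.degree v ≤ M)
    (t : ℂ) (x₀ : V) (e : G.Dart) (he : e.fst = x₀) (m : ℕ) (hm : 3 ≤ m) :
    CentFL G t m x₀ e e.symm
      = Cent G t (m - 2) e.snd e.snd + 2 * (t - 1) * Nfirst G t (m - 2) e.snd e.symm
        + (t ^ 2 - 1) * CentFL G t (m - 2) e.snd e.symm e := by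
  classical
  subst he
  obtain ⟨n, rfl⟩ : ∃ n, m = n + 2 := ⟨m - 2, by omega⟩
  have hn : 1 ≤ n := by omega
  simp only [Nat.add_sub_cancel]
  have hdne : ∀ w : {w : G.Walk e.snd e.snd // w.length = n}, w.1.darts ≠ [] := by
    intro w h
    have h1 := w.1.length_darts
    rw [h, w.2] at h1
    simp at h1
    omega
  -- bump count of the extended walk
  have hbc : ∀ w : {w : G.Walk e.snd e.snd // w.length = n},
      bc G (extWalk e n w).1
        = bc G w.1 + ((if Ahead e w then 1 else 0) + (if Blast e w then 1 else 0)) := by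
    intro w
    have hhd : (w.1.darts ++ [e.symm]).head? = w.1.darts.head? := by
      obtain ⟨c, l', hcl⟩ := List.exists_cons_of_ne_nil (hdne w)
      rw [hcl]; simp
    show bcL G (Walk.cons e.adj (w.1.concat (G.adj_symm e.adj))).darts = _
    rw [darts_extend, bcL_cons, bcL_concat, hhd, Dart.symm_symm, bc_eq]
    by_cases h1 : w.1.darts.head? = some e.symm <;>
      by_cases h2 : w.1.darts.getLast? = some e <;>
        simp [Ahead, Blast, h1, h2] <;> omega
  -- the left-hand side as a sum over walks of length n
  have hLHS : CentFL G t (n + 2) e.fst e e.symm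
      = ∑ w : {w : G.Walk e.snd e.snd // w.length = n},
          t ^ (bc G w.1 + ((if Ahead e w then 1 else 0) + (if Blast e w then 1 else 0))) := by
    rw [show CentFL G t (n + 2) e.fst e e.symm
        = ∑' w : {w : G.Walk e.fst e.fst // w.length = n + 2 ∧ w.darts.head? = some e ∧
            w.darts.getLast? = some e.symm}, t ^ bc G w.1 from rfl]
    rw [← Equiv.tsum_eq (Equiv.ofBijective _ (extWalk_bijective e n hn))
      (fun w => t ^ bc G w.1), tsum_fintype]
    refine Finset.sum_congr rfl fun w _ => ?_
    show t ^ bc G (extWalk e n w).1 = _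
    rw [hbc w]
  -- the plain count
  have hC : Cent G t n e.snd e.snd
      = ∑ w : {w : G.Walk e.snd e.snd // w.length = n}, t ^ bc G w.1 := by
    rw [show Cent G t n e.snd e.snd
        = ∑' w : {w : G.Walk e.snd e.snd // w.length = n}, t ^ bc G w.1 from rfl, tsum_fintype]
  -- the tail-less count
  have hN : Nfirst G t n e.snd e.symm
      = ∑ w : {w : G.Walk e.snd e.snd // w.length = n},
          if Ahead e w ∧ ¬ Blast e w then t ^ bc G w.1 else 0 := by
    rw [show Nfirst G t n e.snd e.symm
        = ∑' w : {w : G.Walk e.snd e.snd // w.length = n ∧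
            (w.darts.head? = some e.symm ∧ ¬ hasTail G w)}, t ^ bc G w.1 from rfl,
      tsum_cond]
    refine Finset.sum_congr rfl fun w _ => ?_
    have hiff : ((w.1.darts.head? = some e.symm ∧ ¬ hasTail G w.1))
        ↔ (Ahead e w ∧ ¬ Blast e w) := by
      constructor
      · rintro ⟨h1, h2⟩
        refine ⟨h1, fun hB => h2 ⟨?_, ?_⟩⟩
        · rw [w.2]; omega
        · rw [hB, h1]; simp [Dart.symm_symm]
      · rintro ⟨h1, h2⟩
        refine ⟨h1, fun hT => h2 ?_⟩
        rcases hT with ⟨-, hT⟩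
        rw [h1] at hT
        exact (by simpa [Dart.symm_symm] using hT : w.1.darts.getLast? = some e)
    by_cases h : Ahead e w ∧ ¬ Blast e w
    · rw [if_pos (hiff.mpr h), if_pos h]
    · rw [if_neg (fun hh => h (hiff.mp hh)), if_neg h]
  -- the first-and-last count
  have hF : CentFL G t n e.snd e.symm e
      = ∑ w : {w : G.Walk e.snd e.snd // w.length = n},
          if Ahead e w ∧ Blast e w then t ^ bc G w.1 else 0 := by
    rw [show CentFL G t n e.snd e.symm e
        = ∑' w : {w : G.Walk e.snd e.snd // w.length = n ∧
            (w.darts.head? = some e.symm ∧ w.darts.getLast? = some e)}, t ^ bc G w.1 from rfl,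
      tsum_cond]
    refine Finset.sum_congr rfl fun w _ => ?_
    have hiff : ((w.1.darts.head? = some e.symm ∧ w.1.darts.getLast? = some e))
        ↔ (Ahead e w ∧ Blast e w) := Iff.rfl
    by_cases h : Ahead e w ∧ Blast e w
    · rw [if_pos (hiff.mpr h), if_pos h]
    · rw [if_neg (fun hh => h (hiff.mp hh)), if_neg h]
  -- reversal symmetry
  have hrev : (∑ w : {w : G.Walk e.snd e.snd // w.length = n},
        if ¬ Ahead e w ∧ Blast e w then t ^ bc G w.1 else 0)
      = ∑ w : {w : G.Walk e.snd e.snd // w.length = n},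
          if Ahead e w ∧ ¬ Blast e w then t ^ bc G w.1 else 0 := by
    refine Fintype.sum_equiv (revS e n) _ _ fun w => ?_
    have hA : Ahead e (revS e n w) ↔ Blast e w := by
      show w.1.reverse.darts.head? = some e.symm ↔ w.1.darts.getLast? = some e
      rw [Walk.darts_reverse, List.head?_reverse, List.getLast?_map]
      cases h : w.1.darts.getLast? with
      | none => simp
      | some d => simp [symm_inj_iff]
    have hB : Blast e (revS e n w) ↔ Ahead e w := by
      show w.1.reverse.darts.getLast? = some e ↔ w.1.darts.head? = some e.symm
      rw [Walk.darts_reverse, List.getLast?_reverse, List.head?_map]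
      cases h : w.1.darts.head? with
      | none => simp
      | some d =>
        simp only [Option.map_some, Option.some.injEq]
        constructor
        · rintro rfl; rw [Dart.symm_symm]
        · rintro rfl; rw [Dart.symm_symm]
    have hbcrev : bc G (revS e n w).1 = bc G w.1 := by
      show bc G w.1.reverse = bc G w.1
      rw [bc_eq, bc_eq, Walk.darts_reverse, bcL_reverse]
    simp only [hA, hB, hbcrev]
    by_cases h : ¬ Ahead e w ∧ Blast e w
    · rw [if_pos h, if_pos (and_comm.mp h)]
    · rw [if_neg h, if_neg (fun hh => h (and_comm.mp hh))]
  -- pointwise splitting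
  have hsplit : ∀ w : {w : G.Walk e.snd e.snd // w.length = n},
      t ^ (bc G w.1 + ((if Ahead e w then 1 else 0) + (if Blast e w then 1 else 0)))
        = t ^ bc G w.1
          + ((t - 1) * (if Ahead e w ∧ ¬ Blast e w then t ^ bc G w.1 else 0)
            + (t - 1) * (if ¬ Ahead e w ∧ Blast e w then t ^ bc G w.1 else 0)
            + (t ^ 2 - 1) * (if Ahead e w ∧ Blast e w then t ^ bc G w.1 else 0)) := by
    intro w
    by_cases h1 : Ahead e w <;> by_cases h2 : Blast e w <;>
      simp [h1, h2, pow_add] <;> ring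
  rw [hLHS, hC, hN, hF, Finset.sum_congr rfl fun w _ => hsplit w,
    Finset.sum_add_distrib, Finset.sum_add_distrib, Finset.sum_add_distrib,
    ← Finset.mul_sum, ← Finset.mul_sum, ← Finset.mul_sum, hrev]
  ring

end BZ
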